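/- arXiv:2209.05100 — 3 statements merged into one kernel-verified Lean document; each statement's English description precedes it below -/
import Mathlib

section
/- Let N ≥ 4 be an integer and let h_N(z) = 1 + (2−N)(z + z²), viewed as a polynomial over ℂ. Then h_N has exactly one root in the open disk {z ∈ ℂ : |z| < (φ−1)²}, where φ = (1+√5)/2 is the golden ratio (so (φ−1)² = (3−√5)/2), and this root is real and positive. -/
open Polynomial Filter

namespace Paper

/-- The number of elements of word length `ℓ` in the Coxeter group of the Coxeter
matrix `M` (with respect to the simple reflections). -/
noncomputable def growthCount {B : Type*} (M : CoxeterMatrix B) (ℓ : ℕ) : ℕ :=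
  Nat.card {w : M.Group // M.toCoxeterSystem.length w = ℓ}

/-- The growth rate τ(Γ,S) = limsup_{ℓ→∞} a_ℓ^{1/ℓ}. -/
noncomputable def growthRate {B : Type*} (M : CoxeterMatrix B) : ℝ :=
  Filter.limsup (fun ℓ : ℕ => (growthCount M ℓ : ℝ) ^ (1 / (ℓ : ℝ))) Filter.atTop

/-- The growth series f(z) = Σ_{ℓ≥0} a_ℓ z^ℓ as a formal power series over ℤ. -/
noncomputable def growthSeries {B : Type*} (M : CoxeterMatrix B) : PowerSeries ℤ :=
  PowerSeries.mk fun ℓ => (growthCount M ℓ : ℤ)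

/-- The cosine matrix of a Coxeter system: entry −cos(π/k_ij), interpreted as −1
when k_ij = ∞ (which is encoded by `0` in a Mathlib `CoxeterMatrix`). -/
noncomputable def cosineMatrix {B : Type*} (M : CoxeterMatrix B) : Matrix B B ℝ :=
  fun i j => if M i j = 0 then -1 else -Real.cos (Real.pi / (M i j : ℝ))

/-- A Coxeter system has dimension at most 2 iff every subset of at least 3 of the
generators generates an infinite subgroup. -/
def DimAtMost2 {B : Type*} (M : CoxeterMatrix B) : Prop :=
  ∀ T : Finset B, 3 ≤ T.card →
    (Subgroup.closure (M.simple '' (T : Set B)) : Set M.Group).Infinite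

/-- The number E of unordered pairs {i,j}, i ≠ j, with k_ij < ∞. -/
noncomputable def edgeCount {N : ℕ} (M : CoxeterMatrix (Fin N)) : ℕ :=
  (Finset.univ.filter fun p : Fin N × Fin N => p.1 < p.2 ∧ M p.1 p.2 ≠ 0).card

/-- The Euler characteristic χ(L(Γ,S)) = N − E of the nerve of a Coxeter system of
dimension at most 2. -/
noncomputable def eulerChar {N : ℕ} (M : CoxeterMatrix (Fin N)) : ℤ :=
  (N : ℤ) - (edgeCount M : ℤ)

/-- A Salem number: a real algebraic integer τ > 1 of degree at least 4 such that τ⁻¹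
is a Galois conjugate of τ and all Galois conjugates other than τ, τ⁻¹ lie on the unit
circle. -/
def IsSalemNum (τ : ℝ) : Prop :=
  1 < τ ∧ IsIntegral ℤ τ ∧ 4 ≤ (minpoly ℤ τ).natDegree ∧
    Polynomial.aeval τ⁻¹ (minpoly ℤ τ) = 0 ∧
    ∀ z : ℂ, Polynomial.aeval z (minpoly ℤ τ) = 0 →
      z ≠ (τ : ℂ) → z ≠ ((τ⁻¹ : ℝ) : ℂ) → ‖z‖ = 1

/-- A Pisot number: a real algebraic integer τ > 1 all of whose Galois conjugates
other than τ itself have modulus < 1 (this includes rational integers τ > 1). -/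
def IsPisotNum (τ : ℝ) : Prop :=
  1 < τ ∧ IsIntegral ℤ τ ∧
    ∀ z : ℂ, Polynomial.aeval z (minpoly ℤ τ) = 0 → z ≠ (τ : ℂ) → ‖z‖ < 1

/-- A Perron number: a real algebraic integer τ > 1 all of whose Galois conjugates
other than τ itself have modulus < τ (this includes rational integers τ > 1). -/
def IsPerronNum (τ : ℝ) : Prop :=
  1 < τ ∧ IsIntegral ℤ τ ∧
    ∀ z : ℂ, Polynomial.aeval z (minpoly ℤ τ) = 0 → z ≠ (τ : ℂ) → ‖z‖ < τ

/-- A Salem polynomial: the minimal polynomial over ℤ of a Salem number. -/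
def IsSalemPoly (p : Polynomial ℤ) : Prop := ∃ τ : ℝ, IsSalemNum τ ∧ p = minpoly ℤ τ

/-- A Pisot polynomial: the minimal polynomial over ℤ of a Pisot number. -/
def IsPisotPoly (p : Polynomial ℤ) : Prop := ∃ τ : ℝ, IsPisotNum τ ∧ p = minpoly ℤ τ

/-- `p` is a product of cyclotomic polynomials and exactly one Salem polynomial. -/
def IsCycloSalemProd (p : Polynomial ℤ) : Prop :=
  ∃ (l : Multiset ℕ) (s : Polynomial ℤ), (∀ n ∈ l, 0 < n) ∧ IsSalemPoly s ∧
    p = s * (l.map fun n => cyclotomic n ℤ).prod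

/-- `p` is a product of cyclotomic polynomials and exactly one Pisot polynomial. -/
def IsCycloPisotProd (p : Polynomial ℤ) : Prop :=
  ∃ (l : Multiset ℕ) (q : Polynomial ℤ), (∀ n ∈ l, 0 < n) ∧ IsPisotPoly q ∧
    p = q * (l.map fun n => cyclotomic n ℤ).prod

/-- Order comparison of labels in {1,2,…} ∪ {∞}, where ∞ is encoded by `0`. -/
def OrdLE (a b : ℕ) : Prop := b = 0 ∨ (a ≠ 0 ∧ a ≤ b)

/-- McMullen's partial order ⪯ on Coxeter systems: an injection of the generators
which does not decrease the orders of products of pairs of generators. -/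
def CoxLE {B B' : Type*} (M : CoxeterMatrix B) (M' : CoxeterMatrix B') : Prop :=
  ∃ ι : B → B', Function.Injective ι ∧ ∀ i j, OrdLE (M i j) (M' (ι i) (ι j))

/-- Convergence of a sequence of labels in {1,2,…} ∪ {∞} (∞ encoded by `0`):
eventually equal when the limit is finite; tending to infinity when the limit is ∞. -/
def LabelTendsto (f : ℕ → ℕ) (m : ℕ) : Prop :=
  if m = 0 then ∀ C : ℕ, ∀ᶠ n in Filter.atTop, f n = 0 ∨ C ≤ f n
  else ∀ᶠ n in Filter.atTop, f n = m

/-- The underlying graph of the presentation diagram: an edge joins `i ≠ j` iff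
`k_ij < ∞`. -/
def presGraph {B : Type*} (M : CoxeterMatrix B) : SimpleGraph B where
  Adj i j := i ≠ j ∧ M i j ≠ 0
  symm := by
    constructor
    intro i j h
    exact ⟨h.1.symm, by rw [M.symmetric]; exact h.2⟩
  loopless := by constructor; intro i h; exact h.1 rfl

/-- The polynomial [m] = 1 + z + ⋯ + z^{m−1}. -/
noncomputable def qint (m : ℕ) : Polynomial ℤ :=
  ∑ i ∈ Finset.range m, Polynomial.X ^ i

/-- for N ≥ 4 the polynomial h_N(z) = 1 + (2−N)(z+z²) has exactly one
root in the open disk of radius (φ−1)² = (3−√5)/2, and this root is real and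
positive. -/
theorem hN_unique_root_in_disk (N : ℕ) (hN : 4 ≤ N) :
    ∃ z : ℂ,
      (‖z‖ < (3 - Real.sqrt 5) / 2 ∧ 1 + (2 - (N : ℂ)) * (z + z ^ 2) = 0) ∧
      (∀ w : ℂ, ‖w‖ < (3 - Real.sqrt 5) / 2 →
        1 + (2 - (N : ℂ)) * (w + w ^ 2) = 0 → w = z) ∧
      z.im = 0 ∧ 0 < z.re := by
  have hN4 : (4:ℝ) ≤ (N:ℝ) := by exact_mod_cast hN
  set c : ℝ := (N:ℝ) - 2 with hc
  have hc2 : (2:ℝ) ≤ c := by simp only [hc]; linarith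
  have hcpos : (0:ℝ) < c := by linarith
  set s : ℝ := Real.sqrt (1 + 4/c) with hsdef
  have hs2 : s^2 = 1 + 4/c := Real.sq_sqrt (by positivity)
  have hs0 : 0 ≤ s := Real.sqrt_nonneg _
  have h4c : 0 < 4/c := by positivity
  have hs1 : 1 < s := by nlinarith
  set x : ℝ := (s - 1)/2 with hxdef
  have hx0 : 0 < x := by simp only [hxdef]; linarith
  have hkey : c * (x^2 + x) = 1 := by
    have hx : x^2 + x = (s^2 - 1)/4 := by simp only [hxdef]; ring
    rw [hx, hs2]; field_simp; ring
  have sqrt5sq : Real.sqrt 5 ^ 2 = 5 := Real.sq_sqrt (by norm_num)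
  have s5nn : 0 ≤ Real.sqrt 5 := Real.sqrt_nonneg 5
  have sqrt5lt : Real.sqrt 5 < 9/4 := by nlinarith
  have hs3 : s^2 ≤ 3 := by
    have : 4/c ≤ 2 := by rw [div_le_iff₀ hcpos]; linarith
    linarith
  have hxr : x < (3 - Real.sqrt 5)/2 := by
    have hs4 : s < 4 - Real.sqrt 5 := by nlinarith
    simp only [hxdef]; linarith
  -- the real equation
  have hreal : 1 + (2 - (N:ℝ)) * (x + x^2) = 0 := by
    have h2N : 2 - (N:ℝ) = -c := by simp only [hc]; ring
    rw [h2N]; nlinarith [hkey]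
  have hCeq : 1 + (2 - (N:ℂ)) * ((x:ℂ) + (x:ℂ)^2) = 0 := by
    have := congrArg (fun t : ℝ => (t : ℂ)) hreal
    push_cast at this
    convert this using 2 <;> push_cast <;> ring
  refine ⟨(x:ℂ), ⟨by simpa [Complex.norm_real, Real.norm_eq_abs, abs_of_pos hx0] using hxr, hCeq⟩, ?_,
    by simp, by simpa using hx0⟩
  intro w hwabs hw
  -- factorization
  have hANe : (2 - (N:ℂ)) ≠ 0 := by
    intro h
    have : (N:ℂ) = 2 := by linear_combination -h
    have : (N:ℝ) = 2 := by exact_mod_cast this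
    linarith
  have hfac : (2 - (N:ℂ)) * (w - (x:ℂ)) * (w + 1 + (x:ℂ)) = 0 := by
    have hkC : ((N:ℂ) - 2) * ((x:ℂ)^2 + (x:ℂ)) = 1 := by
      have h2 : ((c:ℝ):ℂ) * (((x:ℝ):ℂ)^2 + ((x:ℝ):ℂ)) = 1 := by exact_mod_cast hkey
      rw [hc] at h2; push_cast at h2; linear_combination h2
    linear_combination hw + hkC
  rcases mul_eq_zero.mp hfac with h | h
  · rcases mul_eq_zero.mp h with h | h
    · exact absurd h hANe
    · linear_combination h
  · exfalso
    have hwval : w = -(1 + (x:ℂ)) := by linear_combination h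
    have habs : ‖w‖ = 1 + x := by
      rw [hwval]
      rw [norm_neg]
      have : (1:ℂ) + (x:ℂ) = ((1 + x : ℝ) : ℂ) := by push_cast; ring
      rw [this, Complex.norm_real, Real.norm_eq_abs, abs_of_pos (by linarith)]
    rw [habs] at hwabs
    nlinarith

end Paper
end

section
/- Let N ≥ 9 and k ≥ 3 be integers, let a be a real number with 1 < a ≤ (1+φ)²/3, and set r = (φ−1)², where φ = (1+√5)/2 is the golden ratio. Then for every z ∈ ℂ with |z| = r, |1 + (2−N)(z + z²)| > (N−2)(r³ + r⁴ + ⋯ + r^{k−1}) + (a−1)(N−1) r^k, where the sum r³ + ⋯ + r^{k−1} is empty (equal to 0) when k = 3. -/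
open Polynomial Filter

namespace Paper

set_option maxHeartbeats 1000000 in
/-- the key inequality |h_N(z)| > |R_{k,N}|-bound on the circle
|z| = (φ−1)² used in the Rouché argument of Theorem 5.1 of the paper. -/
theorem rouche_inequality (N k : ℕ) (hN : 9 ≤ N) (hk : 3 ≤ k)
    (a : ℝ) (ha1 : 1 < a) (ha2 : a ≤ (1 + (1 + Real.sqrt 5) / 2) ^ 2 / 3) :
    ∀ z : ℂ, ‖z‖ = (3 - Real.sqrt 5) / 2 →
      ((N : ℝ) - 2) * (∑ i ∈ Finset.Ico 3 k, ((3 - Real.sqrt 5) / 2) ^ i) +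
          (a - 1) * ((N : ℝ) - 1) * ((3 - Real.sqrt 5) / 2) ^ k
        < ‖1 + (2 - (N : ℂ)) * (z + z ^ 2)‖ := by
  intro z hz
  set s : ℝ := Real.sqrt 5 with hs_def
  have hs2 : s ^ 2 = 5 := Real.sq_sqrt (by norm_num)
  have hs_pos : 0 < s := Real.sqrt_pos.mpr (by norm_num)
  clear_value s
  have hs_lb : 2.236 < s := by nlinarith
  have hs_ub : s < 2.2361 := by nlinarith
  set r : ℝ := (3 - s) / 2 with hr_def
  have hr_pos : 0 < r := by rw [hr_def]; nlinarith
  have hr1 : r < 1 := by rw [hr_def]; nlinarith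
  have hr2 : r ^ 2 = (7 - 3 * s) / 2 := by
    rw [hr_def]; linear_combination (1/4 : ℝ) * hs2
  have hr3 : r ^ 3 = 9 - 4 * s := by
    rw [hr_def]; linear_combination ((9 - s)/8 : ℝ) * hs2
  have hrr : r - r ^ 2 = s - 2 := by rw [hr2, hr_def]; ring
  clear_value r
  set c : ℝ := (N : ℝ) - 2 with hc_def
  have hc7 : (7 : ℝ) ≤ c := by
    have : (9 : ℝ) ≤ N := by exact_mod_cast hN
    rw [hc_def]; linarith
  have hNc : (N : ℝ) - 1 = c + 1 := by rw [hc_def]; ring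
  -- sum bound
  have hsum : ∑ i ∈ Finset.Ico 3 k, r ^ i ≤ (5 * s - 11) / 2 := by
    calc ∑ i ∈ Finset.Ico 3 k, r ^ i ≤ r ^ 3 / (1 - r) :=
          geom_sum_Ico_le_of_lt_one hr_pos.le hr1
      _ ≤ (5 * s - 11) / 2 := by
          rw [div_le_iff₀ (by linarith : (0:ℝ) < 1 - r)]
          rw [hr3, hr_def]; nlinarith
  have hrk3 : r ^ k ≤ 9 - 4 * s := by
    calc r ^ k ≤ r ^ 3 := pow_le_pow_of_le_one hr_pos.le hr1.le hk
      _ = 9 - 4 * s := hr3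
  have hrk0 : 0 ≤ r ^ k := pow_nonneg hr_pos.le k
  have ha' : a - 1 ≤ (1 + 3 * s) / 6 := by nlinarith
  -- complex part
  have hzz : z.re * z.re + z.im * z.im = r * r := by
    have h := Complex.sq_norm z
    rw [hz, Complex.normSq_apply] at h
    nlinarith [h]
  have habs_re : |z.re| ≤ r := by
    have h := Complex.abs_re_le_norm z
    rwa [hz] at h
  have hxr : z.re ≤ r := le_trans (le_abs_self _) habs_re
  have hxr' : -r ≤ z.re := neg_le_of_neg_le (le_trans (neg_le_abs _) habs_re)
  have hy2 : z.im * z.im = r * r - z.re * z.re := by linarith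
  have hre : (1 + (2 - (N : ℂ)) * (z + z ^ 2)).re
      = 1 - c * (z.re + z.re * z.re - z.im * z.im) := by
    simp [Complex.add_re, Complex.mul_re, Complex.add_im, Complex.mul_im,
      Complex.sub_re, Complex.sub_im, pow_two, hc_def]
    ring
  have him : (1 + (2 - (N : ℂ)) * (z + z ^ 2)).im
      = -(c * (z.im + 2 * z.re * z.im)) := by
    simp [Complex.add_re, Complex.mul_re, Complex.add_im, Complex.mul_im,
      Complex.sub_re, Complex.sub_im, pow_two, hc_def]
    ring
  have hfac : 0 ≤ 2 * (r - z.re) + c * r ^ 2 - 1 := by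
    rw [hr2]; nlinarith
  have hP : 0 ≤ c * (z.re + r) * (2 * (r - z.re) + c * r ^ 2 - 1) :=
    mul_nonneg (mul_nonneg (by linarith) (by linarith)) hfac
  have hm_pos : (0 : ℝ) < 1 + c * (r - r ^ 2) := by nlinarith [hrr]
  have hid : (1 - c * (z.re + z.re * z.re - z.im * z.im)) * (1 - c * (z.re + z.re * z.re - z.im * z.im))
        + -(c * (z.im + 2 * z.re * z.im)) * -(c * (z.im + 2 * z.re * z.im))
      = (1 + c * (r - r ^ 2)) ^ 2
        + 2 * (c * (z.re + r) * (2 * (r - z.re) + c * r ^ 2 - 1)) := by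
    linear_combination (2 * c * (1 - c * (z.re + z.re * z.re))
      + c ^ 2 * (z.im * z.im + (r * r - z.re * z.re)) + c ^ 2 * (1 + 2 * z.re) ^ 2) * hy2
  have key : 1 + c * (r - r ^ 2) ≤ ‖1 + (2 - (N : ℂ)) * (z + z ^ 2)‖ := by
    rw [Complex.norm_def]
    have h2 : (1 + c * (r - r ^ 2)) ^ 2 ≤ Complex.normSq (1 + (2 - (N : ℂ)) * (z + z ^ 2)) := by
      rw [Complex.normSq_apply, hre, him, hid]
      linarith [hP]
    calc 1 + c * (r - r ^ 2) = Real.sqrt ((1 + c * (r - r ^ 2)) ^ 2) :=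
          (Real.sqrt_sq hm_pos.le).symm
      _ ≤ _ := Real.sqrt_le_sqrt h2
  -- final chain
  have h1 : c * (∑ i ∈ Finset.Ico 3 k, r ^ i) ≤ c * ((5 * s - 11) / 2) :=
    mul_le_mul_of_nonneg_left hsum (by linarith)
  have h2 : (a - 1) * ((N : ℝ) - 1) * r ^ k ≤ (1 + 3 * s) / 6 * ((N : ℝ) - 1) * (9 - 4 * s) := by
    have hN1 : (0 : ℝ) ≤ (N : ℝ) - 1 := by linarith [hc7, hNc]
    have h := mul_le_mul ha' hrk3 hrk0 (by nlinarith : (0:ℝ) ≤ (1 + 3 * s) / 6)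
    calc (a - 1) * ((N : ℝ) - 1) * r ^ k = ((N : ℝ) - 1) * ((a - 1) * r ^ k) := by ring
      _ ≤ ((N : ℝ) - 1) * ((1 + 3 * s) / 6 * (9 - 4 * s)) := mul_le_mul_of_nonneg_left h hN1
      _ = (1 + 3 * s) / 6 * ((N : ℝ) - 1) * (9 - 4 * s) := by ring
  have h3 : c * ((5 * s - 11) / 2) + (1 + 3 * s) / 6 * ((N : ℝ) - 1) * (9 - 4 * s)
      < 1 + c * (r - r ^ 2) := by
    have hcs : 0 ≤ c * (2.25 - s) := mul_nonneg (by linarith) (by linarith)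
    rw [hNc, hrr]; nlinarith
  calc ((N : ℝ) - 2) * (∑ i ∈ Finset.Ico 3 k, r ^ i) + (a - 1) * ((N : ℝ) - 1) * r ^ k
      ≤ c * ((5 * s - 11) / 2) + (1 + 3 * s) / 6 * ((N : ℝ) - 1) * (9 - 4 * s) := by
        exact add_le_add h1 h2
    _ < 1 + c * (r - r ^ 2) := h3
    _ ≤ _ := key


end Paper
end

section
/- Let N ≥ 9 and k ≥ 3 be integers and let a be a real number with 1 < a ≤ (1+φ)²/3, where φ = (1+√5)/2 is the golden ratio. Then the polynomial P(z) = 1 + (2−N)(z + z² + ⋯ + z^{k−1}) + (a−1)(N−1) z^k has exactly one root in the open disk {z ∈ ℂ : |z| < (φ−1)²}, and this root is real. -/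
open Polynomial Filter

namespace Paper

/-- Auxiliary: for `0 ≤ c ≤ 1/2` and `1 ≤ j`, `(m + j) * c ^ m ≤ j`. -/
lemma auxGeom (j c : ℝ) (hj : 1 ≤ j) (hc0 : 0 ≤ c) (hc : c ≤ 1/2) :
    ∀ m : ℕ, ((m : ℝ) + j) * c ^ m ≤ j := by
  intro m
  induction m with
  | zero => simp
  | succ m ih =>
    have hcm0 : (0:ℝ) ≤ c ^ m := pow_nonneg hc0 m
    have hcm1 : c ^ m ≤ 1 := pow_le_one₀ hc0 (by linarith)
    have hmj0 : (0:ℝ) ≤ ((m : ℝ) + j) * c ^ m :=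
      mul_nonneg (by have := Nat.cast_nonneg (α := ℝ) m; linarith) hcm0
    have key : ((m : ℝ) + 1 + j) * c ^ (m + 1) = c * (((m : ℝ) + j) * c ^ m + c ^ m) := by ring
    push_cast
    rw [key]
    have h1 : ((m : ℝ) + j) * c ^ m + c ^ m ≤ j + 1 := by linarith
    have h2 : (0:ℝ) ≤ ((m : ℝ) + j) * c ^ m + c ^ m := by linarith
    calc c * (((m : ℝ) + j) * c ^ m + c ^ m) ≤ (1/2) * (j + 1) :=
          mul_le_mul hc h1 h2 (by linarith)
      _ ≤ j := by linarith

lemma kpow1 (k : ℕ) (hk : 3 ≤ k) : (k : ℝ) * (0.28:ℝ) ^ (k - 1) ≤ 0.2352 := by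
  obtain ⟨m, rfl⟩ : ∃ m, k = m + 3 := ⟨k - 3, by omega⟩
  have h := auxGeom 3 0.28 (by norm_num) (by norm_num) (by norm_num) m
  have hrw : ((m + 3 : ℕ) : ℝ) * (0.28:ℝ) ^ ((m + 3) - 1)
      = (0.28:ℝ) ^ 2 * (((m : ℝ) + 3) * (0.28:ℝ) ^ m) := by
    push_cast
    ring
  rw [hrw]
  nlinarith [h]

lemma kpow2 (k : ℕ) (hk : 3 ≤ k) : ((k : ℝ) + 1) * (0.28:ℝ) ^ k ≤ 0.087808 := by
  obtain ⟨m, rfl⟩ : ∃ m, k = m + 3 := ⟨k - 3, by omega⟩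
  have h := auxGeom 4 0.28 (by norm_num) (by norm_num) (by norm_num) m
  have hrw : (((m + 3 : ℕ) : ℝ) + 1) * (0.28:ℝ) ^ (m + 3)
      = (0.28:ℝ) ^ 3 * (((m : ℝ) + 4) * (0.28:ℝ) ^ m) := by
    push_cast
    ring
  rw [hrw]
  nlinarith [h]

lemma powSubBound (M : ℝ) (z w : ℂ) (hz : ‖z‖ ≤ M) (hw : ‖w‖ ≤ M)
    (k : ℕ) : ‖z ^ k - w ^ k‖ ≤ (k : ℝ) * M ^ (k - 1) * ‖z - w‖ := by
  have hM : 0 ≤ M := le_trans (norm_nonneg z) hz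
  rw [← geom_sum₂_mul z w k, norm_mul]
  have hsum : ‖∑ i ∈ Finset.range k, z ^ i * w ^ (k - 1 - i)‖
      ≤ (k : ℝ) * M ^ (k - 1) := by
    refine le_trans (norm_sum_le _ _) ?_
    have hterm : ∀ i ∈ Finset.range k,
        ‖z ^ i * w ^ (k - 1 - i)‖ ≤ M ^ (k - 1) := by
      intro i hi
      have hik : i < k := Finset.mem_range.mp hi
      have h1 : ‖z‖ ^ i ≤ M ^ i := pow_le_pow_left₀ (norm_nonneg z) hz i
      have h2 : ‖w‖ ^ (k - 1 - i) ≤ M ^ (k - 1 - i) :=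
        pow_le_pow_left₀ (norm_nonneg w) hw _
      have h3 : ‖z ^ i * w ^ (k - 1 - i)‖ ≤ M ^ i * M ^ (k - 1 - i) := by
        rw [norm_mul, norm_pow, norm_pow]
        exact mul_le_mul h1 h2 (by positivity) (by positivity)
      rwa [← pow_add, show i + (k - 1 - i) = k - 1 by omega] at h3
    calc (∑ i ∈ Finset.range k, ‖z ^ i * w ^ (k - 1 - i)‖)
        ≤ ∑ _i ∈ Finset.range k, M ^ (k - 1) := Finset.sum_le_sum hterm
      _ = (k : ℝ) * M ^ (k - 1) := by
          rw [Finset.sum_const, Finset.card_range, nsmul_eq_mul]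
  exact mul_le_mul_of_nonneg_right hsum (norm_nonneg _)

lemma normComb (C D x y : ℂ) : ‖C * x - D * y‖
    ≤ ‖C‖ * ‖x‖ + ‖D‖ * ‖y‖ := by
  rw [sub_eq_add_neg]
  refine le_trans (norm_add_le _ _) ?_
  simp [norm_mul]

set_option maxHeartbeats 1600000 in
/-- the denominator polynomial
P(z) = 1 + (2−N)(z + ⋯ + z^{k−1}) + (a−1)(N−1)z^k of the growth series of the
Coxeter systems of Theorem 5.1 has exactly one root in the open disk of radius
(φ−1)², and this root is real. -/
theorem denominator_unique_root_in_disk (N k : ℕ) (hN : 9 ≤ N) (hk : 3 ≤ k)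
    (a : ℝ) (ha1 : 1 < a) (ha2 : a ≤ (1 + (1 + Real.sqrt 5) / 2) ^ 2 / 3) :
    ∃ z : ℂ,
      (‖z‖ < (3 - Real.sqrt 5) / 2 ∧
        1 + (2 - (N : ℂ)) * (∑ i ∈ Finset.Ico 1 k, z ^ i) +
          ((a : ℂ) - 1) * ((N : ℂ) - 1) * z ^ k = 0) ∧
      (∀ w : ℂ, ‖w‖ < (3 - Real.sqrt 5) / 2 →
        1 + (2 - (N : ℂ)) * (∑ i ∈ Finset.Ico 1 k, w ^ i) +
          ((a : ℂ) - 1) * ((N : ℂ) - 1) * w ^ k = 0 → w = z) ∧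
      z.im = 0 := by
  have hknz : k ≠ 0 := by omega
  have hs0 : (0:ℝ) ≤ Real.sqrt 5 := Real.sqrt_nonneg 5
  have hs2 : Real.sqrt 5 ^ 2 = 5 := Real.sq_sqrt (by norm_num)
  have hsl : 2.23606 < Real.sqrt 5 := by nlinarith [hs2, hs0]
  have hsu : Real.sqrt 5 < 2.23608 := by nlinarith [hs2, hs0]
  set r : ℝ := (3 - Real.sqrt 5) / 2 with hrdef
  have hrl : 0.38196 < r := by rw [hrdef]; linarith
  have hru : r < 0.38197 := by rw [hrdef]; linarith
  have hr0 : 0 < r := by linarith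
  have haU : a - 1 ≤ 1.28471 := by nlinarith [ha2, hs2, hsu, hs0]
  have ha0 : 0 < a - 1 := by linarith
  have hn9 : (9:ℝ) ≤ (N:ℝ) := by exact_mod_cast hN
  have hr3 : r ^ 3 < 0.05574 := by
    have h3 : r ^ 3 < (0.38197:ℝ) ^ 3 := pow_lt_pow_left₀ hru hr0.le (by norm_num)
    nlinarith [h3]
  have hr4 : r ^ 4 < 0.0213 := by
    have h4 : r ^ 4 < (0.38197:ℝ) ^ 4 := pow_lt_pow_left₀ hru hr0.le (by norm_num)
    nlinarith [h4]
  -- the real polynomial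
  set f : ℝ → ℝ := fun x =>
    1 + (2 - (N:ℝ)) * (∑ i ∈ Finset.Ico 1 k, x ^ i) + (a - 1) * ((N:ℝ) - 1) * x ^ k
    with hfdef
  have hf0 : f 0 = 1 := by
    simp only [hfdef]
    rw [Finset.sum_eq_zero fun i hi => zero_pow (by
      have := (Finset.mem_Ico.mp hi).1; omega), zero_pow hknz]
    ring
  have hfr : f r < 0 := by
    have hsub : Finset.Ico 1 3 ⊆ Finset.Ico 1 k := Finset.Ico_subset_Ico le_rfl hk
    have hsum_ge : r + r ^ 2 ≤ ∑ i ∈ Finset.Ico 1 k, r ^ i := by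
      have h13 : ∑ i ∈ Finset.Ico 1 3, r ^ i = r + r ^ 2 := by
        rw [show Finset.Ico 1 3 = {1, 2} from rfl]
        simp [Finset.sum_insert, pow_one]
      rw [← h13]
      exact Finset.sum_le_sum_of_subset_of_nonneg hsub fun i _ _ => pow_nonneg hr0.le i
    have hrk : r ^ k ≤ r ^ 3 := pow_le_pow_of_le_one hr0.le (by linarith) hk
    have h1 : (2 - (N:ℝ)) * (∑ i ∈ Finset.Ico 1 k, r ^ i) ≤ (2 - (N:ℝ)) * (r + r ^ 2) :=
      mul_le_mul_of_nonpos_left hsum_ge (by linarith)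
    have h2 : (a - 1) * ((N:ℝ) - 1) * r ^ k ≤ 1.28471 * ((N:ℝ) - 1) * 0.05574 := by
      have hrk' : r ^ k ≤ 0.05574 := le_trans hrk hr3.le
      have hrk0 : (0:ℝ) ≤ r ^ k := pow_nonneg hr0.le k
      gcongr <;> linarith
    have h3 : (2 - (N:ℝ)) * (r + r ^ 2) ≤ (2 - (N:ℝ)) * 0.52785 := by
      have : (0.52785:ℝ) ≤ r + r ^ 2 := by nlinarith [hrl, sq_nonneg (r - 0.38196)]
      exact mul_le_mul_of_nonpos_left this (by linarith)
    simp only [hfdef]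
    linarith [h1, h2, h3, hn9]
  have hcont : Continuous f := by
    rw [hfdef]
    exact (continuous_const.add (continuous_const.mul
      (continuous_finset_sum _ fun i _ => continuous_pow i))).add
      (continuous_const.mul (continuous_pow k))
  obtain ⟨x, hxmem, hxroot⟩ : ∃ x ∈ Set.Ioo (0:ℝ) r, f x = 0 := by
    have h0mem : (0:ℝ) ∈ Set.Ioo (f r) (f 0) := by
      rw [hf0]; exact ⟨hfr, one_pos⟩
    obtain ⟨x, hx1, hx2⟩ := intermediate_value_Ioo' hr0.le hcont.continuousOn h0mem
    exact ⟨x, hx1, hx2⟩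
  -- casting
  have hcast : ∀ y : ℝ, 1 + (2 - (N : ℂ)) * (∑ i ∈ Finset.Ico 1 k, (y:ℂ) ^ i) +
      ((a : ℂ) - 1) * ((N : ℂ) - 1) * (y:ℂ) ^ k = ((f y : ℝ) : ℂ) := by
    intro y
    simp only [hfdef]
    push_cast
    ring
  -- the quadratic-style identity: roots of P are roots of Q
  have hQ : ∀ w : ℂ, 1 + (2 - (N : ℂ)) * (∑ i ∈ Finset.Ico 1 k, w ^ i) +
      ((a : ℂ) - 1) * ((N : ℂ) - 1) * w ^ k = 0 →
      1 - ((N:ℂ) - 1) * w + (((a:ℂ) - 1) * ((N:ℂ) - 1) + ((N:ℂ) - 2)) * w ^ k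
        - ((a:ℂ) - 1) * ((N:ℂ) - 1) * w ^ (k + 1) = 0 := by
    intro w hw
    have hg := geom_sum_Ico_mul w (show 1 ≤ k by omega)
    have hg' : (∑ i ∈ Finset.Ico 1 k, w ^ i) * (w - 1) = w ^ k - w ^ 1 := hg
    linear_combination (1 - w) * hw + (2 - (N:ℂ)) * hg'
  -- abs computations
  have hNC : ‖(N:ℂ) - 1‖ = (N:ℝ) - 1 := by
    rw [show (N:ℂ) - 1 = (((N:ℝ) - 1 : ℝ) : ℂ) by push_cast; ring, Complex.norm_real, Real.norm_eq_abs]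
    exact abs_of_nonneg (by linarith)
  have hCnn : (0:ℝ) ≤ (a - 1) * ((N:ℝ) - 1) :=
    mul_nonneg ha0.le (by linarith)
  have hCC : ‖((a:ℂ) - 1) * ((N:ℂ) - 1) + ((N:ℂ) - 2)‖
      = (a - 1) * ((N:ℝ) - 1) + ((N:ℝ) - 2) := by
    rw [show ((a:ℂ) - 1) * ((N:ℂ) - 1) + ((N:ℂ) - 2)
        = (((a - 1) * ((N:ℝ) - 1) + ((N:ℝ) - 2) : ℝ) : ℂ) by push_cast; ring,
      Complex.norm_real, Real.norm_eq_abs]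
    exact abs_of_nonneg (by linarith [hCnn])
  have hDC : ‖((a:ℂ) - 1) * ((N:ℂ) - 1)‖ = (a - 1) * ((N:ℝ) - 1) := by
    rw [show ((a:ℂ) - 1) * ((N:ℂ) - 1) = (((a - 1) * ((N:ℝ) - 1) : ℝ) : ℂ) by push_cast; ring,
      Complex.norm_real, Real.norm_eq_abs]
    exact abs_of_nonneg hCnn
  -- every root in the disk is small
  have hsmall : ∀ w : ℂ, ‖w‖ < r →
      1 + (2 - (N : ℂ)) * (∑ i ∈ Finset.Ico 1 k, w ^ i) +
        ((a : ℂ) - 1) * ((N : ℂ) - 1) * w ^ k = 0 → ‖w‖ ≤ 0.28 := by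
    intro w hwr hw
    have hq := hQ w hw
    have heq : ((N:ℂ) - 1) * w = 1 + (((a:ℂ) - 1) * ((N:ℂ) - 1) + ((N:ℂ) - 2)) * w ^ k
        - ((a:ℂ) - 1) * ((N:ℂ) - 1) * w ^ (k + 1) := by linear_combination - hq
    have hw0 : (0:ℝ) ≤ ‖w‖ := norm_nonneg w
    have hw1 : ‖w‖ ≤ 1 := by linarith
    have hwk : ‖w‖ ^ k ≤ 0.05574 := by
      calc ‖w‖ ^ k ≤ ‖w‖ ^ 3 := pow_le_pow_of_le_one hw0 hw1 hk
        _ ≤ r ^ 3 := pow_le_pow_left₀ hw0 hwr.le 3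
        _ ≤ 0.05574 := hr3.le
    have hwk1 : ‖w‖ ^ (k + 1) ≤ 0.0213 := by
      calc ‖w‖ ^ (k + 1) ≤ ‖w‖ ^ 4 :=
            pow_le_pow_of_le_one hw0 hw1 (by omega)
        _ ≤ r ^ 4 := pow_le_pow_left₀ hw0 hwr.le 4
        _ ≤ 0.0213 := hr4.le
    have htri : ‖1 + (((a:ℂ) - 1) * ((N:ℂ) - 1) + ((N:ℂ) - 2)) * w ^ k
        - ((a:ℂ) - 1) * ((N:ℂ) - 1) * w ^ (k + 1)‖
        ≤ 1 + ((a - 1) * ((N:ℝ) - 1) + ((N:ℝ) - 2)) * ‖w‖ ^ k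
          + (a - 1) * ((N:ℝ) - 1) * ‖w‖ ^ (k + 1) := by
      rw [add_sub_assoc]
      refine le_trans (norm_add_le _ _) ?_
      have := normComb (((a:ℂ) - 1) * ((N:ℂ) - 1) + ((N:ℂ) - 2)) 0 (w ^ k) 0
      have h2 := normComb (((a:ℂ) - 1) * ((N:ℂ) - 1) + ((N:ℂ) - 2))
        (((a:ℂ) - 1) * ((N:ℂ) - 1)) (w ^ k) (w ^ (k + 1))
      rw [hCC, hDC, norm_pow, norm_pow] at h2
      simp only [norm_one]
      linarith [h2]
    have key : ((N:ℝ) - 1) * ‖w‖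
        ≤ 1 + ((a - 1) * ((N:ℝ) - 1) + ((N:ℝ) - 2)) * 0.05574
          + (a - 1) * ((N:ℝ) - 1) * 0.0213 := by
      have e1 : ((N:ℝ) - 1) * ‖w‖ = ‖((N:ℂ) - 1) * w‖ := by
        rw [norm_mul, hNC]
      rw [e1, heq]
      refine le_trans htri ?_
      have b1 : ((a - 1) * ((N:ℝ) - 1) + ((N:ℝ) - 2)) * ‖w‖ ^ k
          ≤ ((a - 1) * ((N:ℝ) - 1) + ((N:ℝ) - 2)) * 0.05574 :=
        mul_le_mul_of_nonneg_left hwk (by linarith)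
      have b2 : (a - 1) * ((N:ℝ) - 1) * ‖w‖ ^ (k + 1)
          ≤ (a - 1) * ((N:ℝ) - 1) * 0.0213 :=
        mul_le_mul_of_nonneg_left hwk1 hCnn
      linarith
    have hprod : (a - 1) * ((N:ℝ) - 1) ≤ 1.28471 * ((N:ℝ) - 1) :=
      mul_le_mul_of_nonneg_right haU (by linarith)
    have h28 : ((N:ℝ) - 1) * ‖w‖ ≤ ((N:ℝ) - 1) * 0.28 := by
      nlinarith [key, hprod, hn9]
    exact le_of_mul_le_mul_left h28 (by linarith)
  -- uniqueness among small roots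
  have huniq : ∀ z w : ℂ, ‖z‖ ≤ 0.28 → ‖w‖ ≤ 0.28 →
      1 + (2 - (N : ℂ)) * (∑ i ∈ Finset.Ico 1 k, z ^ i) +
        ((a : ℂ) - 1) * ((N : ℂ) - 1) * z ^ k = 0 →
      1 + (2 - (N : ℂ)) * (∑ i ∈ Finset.Ico 1 k, w ^ i) +
        ((a : ℂ) - 1) * ((N : ℂ) - 1) * w ^ k = 0 → z = w := by
    intro z w hz28 hw28 hz hw
    have hqz := hQ z hz
    have hqw := hQ w hw
    have heq : ((N:ℂ) - 1) * (z - w)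
        = (((a:ℂ) - 1) * ((N:ℂ) - 1) + ((N:ℂ) - 2)) * (z ^ k - w ^ k)
          - ((a:ℂ) - 1) * ((N:ℂ) - 1) * (z ^ (k + 1) - w ^ (k + 1)) := by
      linear_combination hqw - hqz
    set t := ‖z - w‖ with htdef
    have ht0 : (0:ℝ) ≤ t := norm_nonneg _
    have hb1 : ‖z ^ k - w ^ k‖ ≤ 0.2352 * t := by
      refine le_trans (powSubBound 0.28 z w hz28 hw28 k) ?_
      exact mul_le_mul_of_nonneg_right (kpow1 k hk) ht0
    have hb2 : ‖z ^ (k + 1) - w ^ (k + 1)‖ ≤ 0.087808 * t := by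
      refine le_trans (powSubBound 0.28 z w hz28 hw28 (k + 1)) ?_
      refine mul_le_mul_of_nonneg_right ?_ ht0
      have := kpow2 k hk
      have hrw : ((k + 1 : ℕ) : ℝ) * (0.28:ℝ) ^ ((k + 1) - 1) = ((k:ℝ) + 1) * (0.28:ℝ) ^ k := by
        rw [Nat.add_sub_cancel]
        push_cast
        ring
      rw [hrw]
      exact this
    have key : ((N:ℝ) - 1) * t
        ≤ ((a - 1) * ((N:ℝ) - 1) + ((N:ℝ) - 2)) * (0.2352 * t)
          + (a - 1) * ((N:ℝ) - 1) * (0.087808 * t) := by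
      have e1 : ((N:ℝ) - 1) * t = ‖((N:ℂ) - 1) * (z - w)‖ := by
        rw [norm_mul, hNC, htdef]
      rw [e1, heq]
      refine le_trans (normComb _ _ _ _) ?_
      rw [hCC, hDC]
      have b1 : ((a - 1) * ((N:ℝ) - 1) + ((N:ℝ) - 2)) * ‖z ^ k - w ^ k‖
          ≤ ((a - 1) * ((N:ℝ) - 1) + ((N:ℝ) - 2)) * (0.2352 * t) :=
        mul_le_mul_of_nonneg_left hb1 (by linarith)
      have b2 : (a - 1) * ((N:ℝ) - 1) * ‖z ^ (k + 1) - w ^ (k + 1)‖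
          ≤ (a - 1) * ((N:ℝ) - 1) * (0.087808 * t) :=
        mul_le_mul_of_nonneg_left hb2 hCnn
      linarith
    have hP : (0:ℝ) ≤ (1.28471 * ((N:ℝ) - 1) - (a - 1) * ((N:ℝ) - 1)) * t := by
      refine mul_nonneg ?_ ht0
      nlinarith [mul_le_mul_of_nonneg_right haU (show (0:ℝ) ≤ (N:ℝ) - 1 by linarith)]
    have hnt : (0:ℝ) ≤ ((N:ℝ) - 9) * t := mul_nonneg (by linarith) ht0
    have htle : t ≤ 0 := by nlinarith [key, hP, hnt]
    have : ‖z - w‖ = 0 := le_antisymm htle ht0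
    have : z - w = 0 := norm_eq_zero.mp this
    exact sub_eq_zero.mp this
  -- assemble
  refine ⟨(x : ℂ), ⟨?_, ?_⟩, ?_, Complex.ofReal_im x⟩
  · rw [Complex.norm_real, Real.norm_eq_abs, abs_of_nonneg hxmem.1.le]
    exact hxmem.2
  · rw [hcast x, hxroot, Complex.ofReal_zero]
  · intro w hwr hwroot
    have hzr : ‖(x:ℂ)‖ < r := by
      rw [Complex.norm_real, Real.norm_eq_abs, abs_of_nonneg hxmem.1.le]
      exact hxmem.2
    have hzroot : 1 + (2 - (N : ℂ)) * (∑ i ∈ Finset.Ico 1 k, (x:ℂ) ^ i) +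
        ((a : ℂ) - 1) * ((N : ℂ) - 1) * (x:ℂ) ^ k = 0 := by
      rw [hcast x, hxroot, Complex.ofReal_zero]
    exact huniq w (x:ℂ) (hsmall w hwr hwroot) (hsmall (x:ℂ) hzr hzroot) hwroot hzroot


end Paper
end
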